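/- For λ > 0, γ > 1, if |y| ≥ γλ, then g = y minimizes the function g ↦ (1/2)(g - y)² + h_{γ,λ}(g) over ℝ. -/

import Mathlib

noncomputable def mcp (γ lam y : ℝ) : ℝ :=
  if |y| ≤ γ * lam then lam * |y| - y ^ 2 / (2 * γ) else lam ^ 2 * γ / 2

theorem mcp_prox_case1 (lam γ y : ℝ) (hlam : 0 < lam) (hγ : 1 < γ)
    (hy : γ * lam ≤ |y|) :
    IsMinOn (fun g => (g - y) ^ 2 / 2 + mcp γ lam g) Set.univ y := by
  intro g _
  simp only [Set.mem_setOf_eq, mcp]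
  have hγ0 : (0:ℝ) < γ := by linarith
  have h2γ : (0:ℝ) < 2 * γ := by linarith
  have hγne : γ ≠ 0 := ne_of_gt hγ0
  have habs : |y| - |g| ≤ |g - y| := by
    have := abs_sub_abs_le_abs_sub y g
    rwa [abs_sub_comm] at this
  have hsq : (g - y) ^ 2 = |g - y| ^ 2 := (sq_abs _).symm
  have hg2 : g ^ 2 = |g| ^ 2 := (sq_abs _).symm
  have hgn : 0 ≤ |g| := abs_nonneg g
  have hgyn : 0 ≤ |g - y| := abs_nonneg _
  have e2 : (g - y) ^ 2 / 2 + (lam * |g| - g ^ 2 / (2 * γ)) =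
      (γ * (g - y) ^ 2 + 2 * γ * lam * |g| - g ^ 2) / (2 * γ) := by
    field_simp; ring
  have h00 : (y - y) ^ 2 / 2 = 0 := by simp
  split_ifs with h1 h2 h2
  · have hyeq : |y| = γ * lam := le_antisymm h1 hy
    have hy2 : y ^ 2 = (γ * lam) ^ 2 := by rw [← sq_abs, hyeq]
    have hkey : γ * lam - |g| ≤ |g - y| := by rw [← hyeq]; linarith
    have H : (γ * lam - |g|) ^ 2 ≤ (g - y) ^ 2 := by
      rw [hsq]
      have hnn : 0 ≤ γ * lam - |g| := by linarith
      nlinarith [mul_le_mul hkey hkey hnn hgyn]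
    have e1 : lam * |y| - y ^ 2 / (2 * γ) = (γ * lam ^ 2 * γ) / (2 * γ) := by
      rw [hyeq, hy2]; field_simp; ring
    rw [h00, zero_add, e1, e2, div_le_div_iff_of_pos_right h2γ, hg2]
    linarith [mul_nonneg hγ0.le (sub_nonneg.mpr H),
      mul_nonneg (sub_nonneg.mpr hγ.le) (sq_nonneg (γ * lam - |g|))]
  · have hyeq : |y| = γ * lam := le_antisymm h1 hy
    have hy2 : y ^ 2 = (γ * lam) ^ 2 := by rw [← sq_abs, hyeq]
    have e1 : lam * |y| - y ^ 2 / (2 * γ) = γ * lam ^ 2 / 2 := by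
      rw [hyeq, hy2]; field_simp; ring
    rw [e1]
    nlinarith [sq_nonneg (g - y)]
  · have hkey : γ * lam - |g| ≤ |g - y| := by linarith
    have H : (γ * lam - |g|) ^ 2 ≤ (g - y) ^ 2 := by
      rw [hsq]
      have hnn : 0 ≤ γ * lam - |g| := by linarith
      nlinarith [mul_le_mul hkey hkey hnn hgyn]
    have e1 : lam ^ 2 * γ / 2 = (γ * lam ^ 2 * γ) / (2 * γ) := by
      field_simp
    rw [h00, zero_add, e1, e2, div_le_div_iff_of_pos_right h2γ, hg2]
    linarith [mul_nonneg hγ0.le (sub_nonneg.mpr H),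
      mul_nonneg (sub_nonneg.mpr hγ.le) (sq_nonneg (γ * lam - |g|))]
  · nlinarith [sq_nonneg (g - y)]
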